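/- Let m ≥ 1, let Q be an m×m signed permutation matrix, and let i, j be indices with Q_{i,j} ≠ 0. Then TR(Q) is a signed permutation matrix and δ_j(TR(Q)) = δ_i(Q). -/

import Mathlib

open Matrix
open scoped Classical

noncomputable section

def IsSignedPerm {m : ℕ} (Q : Matrix (Fin m) (Fin m) ℝ) : Prop :=
  (∀ i, ∃! j, Q i j ≠ 0) ∧ (∀ j, ∃! i, Q i j ≠ 0) ∧
    ∀ i j, Q i j ≠ 0 → Q i j = 1 ∨ Q i j = -1

def NE {m : ℕ} (Q : Matrix (Fin m) (Fin m) ℝ) (i j : Fin m) : ℕ :=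
  (Finset.univ.filter fun p : Fin m × Fin m => p.1 < i ∧ j < p.2 ∧ Q p.1 p.2 ≠ 0).card

def SW {m : ℕ} (Q : Matrix (Fin m) (Fin m) ℝ) (i j : Fin m) : ℕ := NE Qᵀ j i

def deltaRow {m : ℕ} (Q : Matrix (Fin m) (Fin m) ℝ) (i : Fin m) : ℝ :=
  ∑ j, Q i j * (-1 : ℝ) ^ NE Q i j

def DeltaM {m : ℕ} (Q : Matrix (Fin m) (Fin m) ℝ) : Matrix (Fin m) (Fin m) ℝ :=
  Matrix.diagonal (deltaRow Q)

def sFun {m : ℕ} (Q : Matrix (Fin m) (Fin m) ℝ) : ℝ := (DeltaM Q).trace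

def Jplus (m : ℕ) : Matrix (Fin m) (Fin m) ℝ :=
  Matrix.diagonal fun i => (-1 : ℝ) ^ (i : ℕ)

def TR {m : ℕ} (Q : Matrix (Fin m) (Fin m) ℝ) : Matrix (Fin m) (Fin m) ℝ :=
  Jplus m * Qᵀ * Jplus m

def Amat (m : ℕ) : Matrix (Fin m) (Fin m) ℝ :=
  Matrix.of fun i j => if (i : ℕ) + (j : ℕ) = m - 1 then (-1 : ℝ) ^ (i : ℕ) else 0

def AD {m : ℕ} (Q : Matrix (Fin m) (Fin m) ℝ) : Matrix (Fin m) (Fin m) ℝ :=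
  (Amat m)ᵀ * Q * Amat m

def IsUpperPos {m : ℕ} (R : Matrix (Fin m) (Fin m) ℝ) : Prop :=
  (∀ i j, j < i → R i j = 0) ∧ ∀ i, 0 < R i i

def Wmat {m : ℕ} (γ : ℝ → Fin m → ℝ) (t : ℝ) : Matrix (Fin m) (Fin m) ℝ :=
  Matrix.of fun i j => iteratedDeriv (j : ℕ) γ t i

def Wronskian {m : ℕ} (γ : ℝ → Fin m → ℝ) (t : ℝ) : ℝ := (Wmat γ t).det

def PosLocConv {m : ℕ} (γ : ℝ → Fin m → ℝ) : Prop :=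
  ∀ t ∈ Set.Icc (0 : ℝ) 1, 0 < Wronskian γ t

def IsFrameAt {m : ℕ} (γ : ℝ → Fin m → ℝ) (t : ℝ) (F : Matrix (Fin m) (Fin m) ℝ) : Prop :=
  Fᵀ * F = 1 ∧ F.det = 1 ∧ ∃ R, IsUpperPos R ∧ Wmat γ t = F * R

def IsFrenet {m : ℕ} (γ : ℝ → Fin m → ℝ) (F : ℝ → Matrix (Fin m) (Fin m) ℝ) : Prop :=
  ∀ t ∈ Set.Icc (0 : ℝ) 1, IsFrameAt γ t (F t)

def e1 {m : ℕ} : Fin m → ℝ := fun i => if (i : ℕ) = 0 then 1 else 0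

def frobNorm {m : ℕ} (M : Matrix (Fin m) (Fin m) ℝ) : ℝ :=
  Real.sqrt (∑ i, ∑ j, (M i j) ^ 2)

lemma TR_apply {m : ℕ} (Q : Matrix (Fin m) (Fin m) ℝ) (a b : Fin m) :
    TR Q a b = (-1 : ℝ) ^ ((a : ℕ) + (b : ℕ)) * Q b a := by
  simp [TR, Jplus, Matrix.mul_diagonal, Matrix.diagonal_mul, pow_add]
  ring

lemma TR_ne_zero_iff {m : ℕ} (Q : Matrix (Fin m) (Fin m) ℝ) (a b : Fin m) :
    TR Q a b ≠ 0 ↔ Q b a ≠ 0 := by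
  rw [TR_apply]
  constructor
  · intro h h'; simp [h'] at h
  · intro h h'
    rcases mul_eq_zero.1 h' with h'' | h''
    · exact absurd h'' (by positivity)
    · exact h h''

lemma count_rows {m : ℕ} (Q : Matrix (Fin m) (Fin m) ℝ)
    (hrow : ∀ i, ∃! j, Q i j ≠ 0) (i : Fin m) :
    (Finset.univ.filter fun p : Fin m × Fin m => p.1 < i ∧ Q p.1 p.2 ≠ 0).card = (i : ℕ) := by
  classical
  choose σ hσ using hrow
  have hcard : ((Finset.univ.filter (· < i)) : Finset (Fin m)).card = (i : ℕ) := by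
    rw [← Fin.card_Iio i]; congr 1; ext x; simp
  rw [← hcard]
  refine Finset.card_bij' (fun p _ => p.1) (fun a _ => (a, σ a)) ?_ ?_ ?_ ?_
  · intro p hp
    simp only [Finset.mem_filter, Finset.mem_univ, true_and] at hp ⊢
    exact hp.1
  · intro a ha
    simp only [Finset.mem_filter, Finset.mem_univ, true_and] at ha ⊢
    exact ⟨ha, (hσ a).1⟩
  · intro p hp
    simp only [Finset.mem_filter, Finset.mem_univ, true_and] at hp
    exact Prod.ext rfl ((hσ p.1).2 p.2 hp.2).symm
  · intro a _; rfl

lemma count_cols {m : ℕ} (Q : Matrix (Fin m) (Fin m) ℝ)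
    (hcol : ∀ j, ∃! i, Q i j ≠ 0) (j : Fin m) :
    (Finset.univ.filter fun p : Fin m × Fin m => p.2 < j ∧ Q p.1 p.2 ≠ 0).card = (j : ℕ) := by
  classical
  rw [← count_rows Qᵀ hcol j]
  refine Finset.card_bij' (fun p _ => p.swap) (fun p _ => p.swap) ?_ ?_ ?_ ?_
  · intro p hp
    simp only [Finset.mem_filter, Finset.mem_univ, true_and, Matrix.transpose_apply] at hp ⊢
    exact Finset.mem_filter.mpr ⟨Finset.mem_univ _, hp⟩
  · intro p hp
    simp only [Finset.mem_filter, Finset.mem_univ, true_and, Matrix.transpose_apply] at hp ⊢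
    exact (Finset.mem_filter.mp hp).2
  · intro p _; rfl
  · intro p _; rfl

theorem stmt2 (m : ℕ) (hm : 1 ≤ m) (Q : Matrix (Fin m) (Fin m) ℝ) (hQ : IsSignedPerm Q)
    (i j : Fin m) (hij : Q i j ≠ 0) :
    IsSignedPerm (TR Q) ∧ deltaRow (TR Q) j = deltaRow Q i := by
  classical
  obtain ⟨hrow, hcol, hval⟩ := hQ
  have hTRsp : IsSignedPerm (TR Q) := by
    refine ⟨?_, ?_, ?_⟩
    · intro a
      obtain ⟨b, hb, hbu⟩ := hcol a
      exact ⟨b, (TR_ne_zero_iff Q a b).mpr hb,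
        fun y hy => hbu y ((TR_ne_zero_iff Q a y).mp hy)⟩
    · intro b
      obtain ⟨a, ha, hau⟩ := hrow b
      exact ⟨a, (TR_ne_zero_iff Q a b).mpr ha,
        fun y hy => hau y ((TR_ne_zero_iff Q y b).mp hy)⟩
    · intro a b h
      rw [TR_apply]
      rcases hval b a ((TR_ne_zero_iff Q a b).mp h) with h' | h' <;>
        rcases Nat.even_or_odd ((a : ℕ) + (b : ℕ)) with he | he <;>
        simp [h', he.neg_one_pow]
  refine ⟨hTRsp, ?_⟩
  -- the four quadrant counts
  set NW := (Finset.univ.filter fun p : Fin m × Fin m =>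
      p.1 < i ∧ p.2 < j ∧ Q p.1 p.2 ≠ 0).card with hNW
  set SWc := (Finset.univ.filter fun p : Fin m × Fin m =>
      i < p.1 ∧ p.2 < j ∧ Q p.1 p.2 ≠ 0).card with hSW
  -- NW + NE = i
  have h1 : NW + NE Q i j = (i : ℕ) := by
    rw [← count_rows Q hrow i, hNW, NE, ← Finset.card_union_of_disjoint]
    · congr 1
      ext p
      simp only [Finset.mem_union, Finset.mem_filter, Finset.mem_univ, true_and]
      constructor
      · rintro (⟨h1, h2, h3⟩ | ⟨h1, h2, h3⟩) <;> exact ⟨h1, h3⟩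
      · rintro ⟨h1, h2⟩
        rcases lt_trichotomy p.2 j with h | h | h
        · exact Or.inl ⟨h1, h, h2⟩
        · exfalso
          obtain ⟨a, _, hau⟩ := hcol j
          have e1 : p.1 = a := hau p.1 (h ▸ h2)
          have e2 : i = a := hau i hij
          rw [e1, ← e2] at h1
          exact lt_irrefl _ h1
        · exact Or.inr ⟨h1, h, h2⟩
    · rw [Finset.disjoint_left]
      intro p hp hq
      simp only [Finset.mem_filter] at hp hq
      exact absurd (hp.2.2.1.trans hq.2.2.1) (lt_irrefl _)
  -- NW + SW = j
  have h2 : NW + SWc = (j : ℕ) := by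
    rw [← count_cols Q hcol j, hNW, hSW, ← Finset.card_union_of_disjoint]
    · congr 1
      ext p
      simp only [Finset.mem_union, Finset.mem_filter, Finset.mem_univ, true_and]
      constructor
      · rintro (⟨h1, h2, h3⟩ | ⟨h1, h2, h3⟩) <;> exact ⟨h2, h3⟩
      · rintro ⟨h1, h2⟩
        rcases lt_trichotomy p.1 i with h | h | h
        · exact Or.inl ⟨h, h1, h2⟩
        · exfalso
          obtain ⟨b, _, hbu⟩ := hrow i
          have e1 : p.2 = b := hbu p.2 (h ▸ h2)
          have e2 : j = b := hbu j hij
          rw [e1, ← e2] at h1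
          exact lt_irrefl _ h1
        · exact Or.inr ⟨h, h1, h2⟩
    · rw [Finset.disjoint_left]
      intro p hp hq
      simp only [Finset.mem_filter] at hp hq
      exact absurd (hp.2.1.trans hq.2.1) (lt_irrefl _)
  -- NE of TR at (j,i) equals SWc
  have h3 : NE (TR Q) j i = SWc := by
    rw [NE, hSW]
    refine Finset.card_bij' (fun p _ => p.swap) (fun p _ => p.swap) ?_ ?_ ?_ ?_
    · intro p hp
      simp only [Finset.mem_filter, Finset.mem_univ, true_and] at hp ⊢
      exact ⟨hp.2.1, hp.1, (TR_ne_zero_iff Q p.1 p.2).mp hp.2.2⟩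
    · intro p hp
      simp only [Finset.mem_filter, Finset.mem_univ, true_and] at hp ⊢
      exact ⟨hp.2.1, hp.1, (TR_ne_zero_iff Q p.2 p.1).mpr hp.2.2⟩
    · intro p _; rfl
    · intro p _; rfl
  -- single-term sums
  have hdQ : deltaRow Q i = Q i j * (-1 : ℝ) ^ NE Q i j := by
    rw [deltaRow]
    apply Finset.sum_eq_single_of_mem j (Finset.mem_univ j)
    intro b _ hb
    obtain ⟨c, _, hcu⟩ := hrow i
    have : Q i b = 0 := by
      by_contra h
      exact hb (((hcu b h).trans (hcu j hij).symm))
    simp [this]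
  have hdT : deltaRow (TR Q) j = TR Q j i * (-1 : ℝ) ^ NE (TR Q) j i := by
    rw [deltaRow]
    apply Finset.sum_eq_single_of_mem i (Finset.mem_univ i)
    intro b _ hb
    obtain ⟨c, _, hcu⟩ := hTRsp.1 j
    have hTRji : TR Q j i ≠ 0 := (TR_ne_zero_iff Q j i).mpr hij
    have : TR Q j b = 0 := by
      by_contra h
      exact hb (((hcu b h).trans (hcu i hTRji).symm))
    simp [this]
  rw [hdT, hdQ, TR_apply, h3]
  have hexp : (j : ℕ) + (i : ℕ) + SWc = 2 * (NW + SWc) + NE Q i j := by omega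
  have hpow : (-1 : ℝ) ^ ((j : ℕ) + (i : ℕ)) * (-1 : ℝ) ^ SWc = (-1 : ℝ) ^ (NE Q i j) := by
    rw [← pow_add, hexp, pow_add, pow_mul]
    norm_num
  linear_combination Q i j * hpow
end
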